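/- The 3×3 matrix with rows (1/2, 1/4, 1/4), (1/4, (3+√5)/8, (3−√5)/8), (1/4, (3−√5)/8, (3+√5)/8) is doubly stochastic and arises as the entrywise squared absolute values of some unitary 3×3 matrix. -/

import Mathlib

noncomputable def tmat : Matrix (Fin 3) (Fin 3) ℝ :=
  !![1/2, 1/4, 1/4;
     1/4, (3 + Real.sqrt 5)/8, (3 - Real.sqrt 5)/8;
     1/4, (3 - Real.sqrt 5)/8, (3 + Real.sqrt 5)/8]

noncomputable def Tw : ℂ :=
  ⟨-(Real.sqrt 2 * (2 + Real.sqrt 5)) / 8, Real.sqrt 6 / 8⟩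

noncomputable def Tz : ℂ :=
  ⟨Real.sqrt 2 * (Real.sqrt 5 - 2) / 8, -(Real.sqrt 6) / 8⟩

noncomputable def Tmat : Matrix (Fin 3) (Fin 3) ℂ :=
  !![⟨Real.sqrt 2 / 2, 0⟩, ⟨1/2, 0⟩, ⟨1/2, 0⟩;
     ⟨1/2, 0⟩, Tw, Tz;
     ⟨1/2, 0⟩, Tz, Tw]

theorem stmt14 :
    (∀ i j, 0 ≤ tmat i j) ∧
    (∀ i, ∑ j, tmat i j = 1) ∧
    (∀ j, ∑ i, tmat i j = 1) ∧
    ∃ T : Matrix (Fin 3) (Fin 3) ℂ, T ∈ Matrix.unitaryGroup (Fin 3) ℂ ∧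
      ∀ i j, ‖T i j‖ ^ 2 = tmat i j := by
  have e2 : Real.sqrt 2 ^ 2 = 2 := Real.sq_sqrt (by norm_num)
  have e5 : Real.sqrt 5 ^ 2 = 5 := Real.sq_sqrt (by norm_num)
  have e6 : Real.sqrt 6 ^ 2 = 6 := Real.sq_sqrt (by norm_num)
  have h5le : Real.sqrt 5 ≤ 3 := by
    nlinarith [Real.sqrt_nonneg 5, Real.sq_sqrt (show (0:ℝ) ≤ 5 by norm_num)]
  refine ⟨?_, ?_, ?_, ?_⟩
  · intro i j
    fin_cases i <;> fin_cases j <;>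
      norm_num [tmat, Matrix.cons_val_zero, Matrix.cons_val_one, Matrix.head_cons,
        Matrix.cons_val_two, Matrix.tail_cons, Matrix.vecHead, Matrix.vecTail] <;>
      nlinarith [Real.sqrt_nonneg 5]
  · intro i
    fin_cases i <;>
      norm_num [tmat, Fin.sum_univ_three, Matrix.cons_val_zero, Matrix.cons_val_one,
        Matrix.head_cons, Matrix.cons_val_two, Matrix.tail_cons, Matrix.vecHead, Matrix.vecTail] <;> ring
  · intro j
    fin_cases j <;>
      norm_num [tmat, Fin.sum_univ_three, Matrix.cons_val_zero, Matrix.cons_val_one,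
        Matrix.head_cons, Matrix.cons_val_two, Matrix.tail_cons, Matrix.vecHead, Matrix.vecTail] <;> ring
  · refine ⟨Tmat, ?_, ?_⟩
    · rw [Matrix.mem_unitaryGroup_iff]
      ext i j
      fin_cases i <;> fin_cases j <;>
        simp [Tmat, Tw, Tz, Matrix.mul_apply, Fin.sum_univ_three, Matrix.one_apply,
          Complex.ext_iff, Complex.mul_re, Complex.mul_im,
          Matrix.cons_val_zero, Matrix.cons_val_one, Matrix.head_cons,
          Matrix.cons_val_two, Matrix.tail_cons, Matrix.vecHead, Matrix.vecTail] <;>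
        (try constructor) <;> ring_nf <;> simp only [e2, e5, e6] <;> norm_num
    · intro i j
      fin_cases i <;> fin_cases j <;>
        simp [Tmat, Tw, Tz, tmat, Complex.sq_norm, Complex.normSq_mk,
          Matrix.cons_val_zero, Matrix.cons_val_one, Matrix.head_cons,
          Matrix.cons_val_two, Matrix.tail_cons, Matrix.vecHead, Matrix.vecTail] <;>
        (try ring_nf) <;> (try simp only [e2, e5, e6]) <;> (try norm_num) <;> (try ring)
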